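/- For every natural number n ≥ 1 and every real x, the Chebyshev polynomial of the first kind satisfies T_n(x) = 2^{n−1} · S̄_n(−1, 1, −1, 0; x). -/

import Mathlib

open Finset Real MeasureTheory

/-- The basic class of symmetric orthogonal polynomials `S_n(p,q,r,s;x)`. -/
noncomputable def S (p q r s : ℝ) (n : ℕ) (x : ℝ) : ℝ :=
  ∑ k ∈ Finset.range (n / 2 + 1),
    (Nat.choose (n / 2) k : ℝ) *
      (∏ i ∈ Finset.range (n / 2 - k),
        ((2 * (i : ℝ) + (-1 : ℝ) ^ (n + 1) + 2 * ((n / 2 : ℕ) : ℝ)) * p + r) /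
        ((2 * (i : ℝ) + (-1 : ℝ) ^ (n + 1) + 2) * q + s)) *
      x ^ (n - 2 * k)

/-- The monic normalization `S̄_n(p,q,r,s;x)`. -/
noncomputable def Sbar (p q r s : ℝ) (n : ℕ) (x : ℝ) : ℝ :=
  (∏ i ∈ Finset.range (n / 2),
    ((2 * (i : ℝ) + (-1 : ℝ) ^ (n + 1) + 2) * q + s) /
    ((2 * (i : ℝ) + (-1 : ℝ) ^ (n + 1) + 2 * ((n / 2 : ℕ) : ℝ)) * p + r)) *
    S p q r s n x

noncomputable def cc (n k : ℕ) : ℝ :=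
  (-1)^k * 2^(n - 2*k) / 2 * ((n:ℝ) / ((n - k : ℕ) : ℝ)) * ((n - k).choose k : ℝ)

lemma cc_rec (N k : ℕ) (hN : 1 ≤ N) (hk1 : 1 ≤ k) (hk2 : 2*k ≤ N+2) :
    cc (N+2) k = 2 * cc (N+1) k - cc N (k-1) := by
  rcases lt_or_ge (2*k) (N+2) with hlt | hge
  · -- 2k ≤ N+1
    obtain ⟨a, rfl⟩ : ∃ a, k = a + 1 := ⟨k-1, by omega⟩
    obtain ⟨j, rfl⟩ : ∃ j, N = 2*a + j + 1 := ⟨N - 2*a - 1, by omega⟩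
    unfold cc
    rw [show (2*a+j+1+2) - 2*(a+1) = j+1 by omega,
        show (2*a+j+1+2) - (a+1) = a+j+2 by omega,
        show (2*a+j+1+1) - 2*(a+1) = j by omega,
        show (2*a+j+1+1) - (a+1) = a+j+1 by omega,
        show (a+1) - 1 = a by omega,
        show (2*a+j+1) - 2*a = j+1 by omega,
        show (2*a+j+1) - a = a+j+1 by omega]
    rw [Nat.cast_choose ℝ (show a+1 ≤ a+j+2 by omega),
        Nat.cast_choose ℝ (show a+1 ≤ a+j+1 by omega),
        Nat.cast_choose ℝ (show a ≤ a+j+1 by omega),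
        show (a+j+2) - (a+1) = j+1 by omega,
        show (a+j+1) - (a+1) = j by omega,
        show (a+j+1) - a = j+1 by omega,
        show (a+j+2).factorial = (a+j+2) * (a+j+1).factorial from Nat.factorial_succ (a+j+1),
        show (j+1).factorial = (j+1) * j.factorial from Nat.factorial_succ j,
        show (a+1).factorial = (a+1) * a.factorial from Nat.factorial_succ a]
    have h1 : (((a+j+1).factorial : ℕ) : ℝ) ≠ 0 := Nat.cast_ne_zero.2 (Nat.factorial_ne_zero _)
    have h2 : ((j.factorial : ℕ) : ℝ) ≠ 0 := Nat.cast_ne_zero.2 (Nat.factorial_ne_zero _)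
    have h3 : ((a.factorial : ℕ) : ℝ) ≠ 0 := Nat.cast_ne_zero.2 (Nat.factorial_ne_zero _)
    have h4 : ((a:ℝ)+j+2) ≠ 0 := by positivity
    have h5 : ((a:ℝ)+j+1) ≠ 0 := by positivity
    have h6 : ((j:ℝ)+1) ≠ 0 := by positivity
    have h7 : ((a:ℝ)+1) ≠ 0 := by positivity
    push_cast
    field_simp
    ring
  · -- 2k = N+2
    obtain ⟨b, rfl⟩ : ∃ b, k = b + 2 := ⟨k-2, by omega⟩
    obtain rfl : N = 2*b + 2 := by omega
    unfold cc
    rw [show (2*b+2+2) - 2*(b+2) = 0 by omega,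
        show (2*b+2+2) - (b+2) = b+2 by omega,
        show (2*b+2+1) - 2*(b+2) = 0 by omega,
        show (2*b+2+1) - (b+2) = b+1 by omega,
        show (b+2) - 1 = b+1 by omega,
        show (2*b+2) - 2*(b+1) = 0 by omega,
        show (2*b+2) - (b+1) = b+1 by omega,
        Nat.choose_self, Nat.choose_self,
        Nat.choose_eq_zero_of_lt (show b+1 < b+2 by omega)]
    have h5 : ((b:ℝ)+2) ≠ 0 := by positivity
    have h7 : ((b:ℝ)+1) ≠ 0 := by positivity
    push_cast
    field_simp
    ring


lemma cc_zero (M : ℕ) (h : 1 ≤ M) : cc M 0 = 2^M / 2 := by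
  unfold cc
  have hM : ((M:ℝ)) ≠ 0 := by
    have : 0 < M := h
    exact_mod_cast this.ne'
  simp [div_self hM]

lemma sum_rec (N : ℕ) (hN : 1 ≤ N) (x : ℝ) :
    ∑ k ∈ range ((N+2)/2+1), cc (N+2) k * x^((N+2)-2*k)
      = 2*x*(∑ k ∈ range ((N+1)/2+1), cc (N+1) k * x^((N+1)-2*k))
        - ∑ k ∈ range (N/2+1), cc N k * x^(N-2*k) := by
  have hext : ∑ k ∈ range ((N+1)/2+1), cc (N+1) k * x^((N+1)-2*k)
      = ∑ k ∈ range (N/2+2), cc (N+1) k * x^((N+1)-2*k) := by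
    rcases Nat.even_or_odd N with ⟨m, hm⟩ | ⟨m, hm⟩
    · subst hm
      have hz : cc (m+m+1) (m+1) = 0 := by
        unfold cc
        rw [show (m+m+1) - (m+1) = m by omega, Nat.choose_eq_zero_of_lt (by omega)]
        simp
      rw [show (m+m+1)/2+1 = m+1 by omega, show (m+m)/2+2 = m+2 by omega,
          Finset.sum_range_succ (fun k => cc (m+m+1) k * x^((m+m+1)-2*k)) (m+1), hz]
      ring
    · subst hm
      rw [show (2*m+1+1)/2+1 = m+2 by omega, show (2*m+1)/2+2 = m+2 by omega]
  rw [hext, show (N+2)/2+1 = N/2+2 by omega,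
      Finset.sum_range_succ' (fun k => cc (N+2) k * x^((N+2)-2*k)) (N/2+1),
      Finset.sum_range_succ' (fun k => cc (N+1) k * x^((N+1)-2*k)) (N/2+1)]
  have hhead : cc (N+2) 0 * x^(N+2) = 2*x*(cc (N+1) 0 * x^(N+1)) - 0 := by
    rw [cc_zero _ (by omega), cc_zero _ (by omega), pow_succ]; ring
  have hterm : ∀ k ∈ range (N/2+1),
      cc (N+2) (k+1) * x^((N+2)-2*(k+1))
        = 2*x*(cc (N+1) (k+1) * x^((N+1)-2*(k+1))) - cc N k * x^(N-2*k) := by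
    intro k hk
    rw [Finset.mem_range] at hk
    have hrec := cc_rec N (k+1) hN (by omega) (by omega)
    rw [show (k+1)-1 = k from rfl] at hrec
    rcases lt_or_ge (2*k) N with hlt | hge
    · obtain ⟨j, hj⟩ : ∃ j, N - 2*k = j + 1 := ⟨N - 2*k - 1, by omega⟩
      rw [show (N+2)-2*(k+1) = j+1 by omega, show (N+1)-2*(k+1) = j by omega,
          hj, hrec, pow_succ]
      ring
    · have h2k : 2*k = N := by omega
      have hz : cc (N+1) (k+1) = 0 := by
        unfold cc
        rw [show (N+1)-(k+1) = k by omega, Nat.choose_eq_zero_of_lt (by omega)]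
        simp
      rw [hz] at hrec ⊢
      rw [show (N+2)-2*(k+1) = N-2*k by omega, hrec]
      ring
  rw [Finset.sum_congr rfl hterm, Finset.sum_sub_distrib, ← Finset.mul_sum]
  simp only [Nat.mul_zero, Nat.sub_zero]
  linear_combination hhead

lemma T_pair (x : ℝ) (n : ℕ) :
    ((Polynomial.Chebyshev.T ℝ ((n+1 : ℕ) : ℤ)).eval x
        = ∑ k ∈ range ((n+1)/2+1), cc (n+1) k * x^((n+1)-2*k))
    ∧ ((Polynomial.Chebyshev.T ℝ ((n+2 : ℕ) : ℤ)).eval x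
        = ∑ k ∈ range ((n+2)/2+1), cc (n+2) k * x^((n+2)-2*k)) := by
  induction n with
  | zero =>
    constructor
    · norm_num [Polynomial.Chebyshev.T_one, cc]
    · norm_num [Polynomial.Chebyshev.T_two, Finset.sum_range_succ, cc]
      try ring
  | succ n ih =>
    refine ⟨ih.2, ?_⟩
    rw [show ((n+1+2 : ℕ) : ℤ) = ((n:ℤ)+1)+2 by push_cast; ring,
        Polynomial.Chebyshev.T_add_two,
        show ((n:ℤ)+1+1) = ((n+2 : ℕ) : ℤ) by push_cast; ring,
        show ((n:ℤ)+1) = ((n+1 : ℕ) : ℤ) by push_cast; ring]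
    simp only [Polynomial.eval_sub, Polynomial.eval_mul, Polynomial.eval_ofNat,
      Polynomial.eval_X]
    rw [ih.1, ih.2, show n+3 = (n+1)+2 from rfl, sum_rec (n+1) (by omega) x]


lemma pureE (t k : ℕ) :
    (2:ℝ) * (2*t+1) * ((k+t+1).choose (k+1)) * ((k+2*t+2).choose k)
      = (k+2*t+2) * ((k+2*t+1).choose (k+1)) * ((k+t+1).choose k) := by
  rw [Nat.cast_choose ℝ (show k+1 ≤ k+t+1 by omega),
      Nat.cast_choose ℝ (show k ≤ k+2*t+2 by omega),
      Nat.cast_choose ℝ (show k+1 ≤ k+2*t+1 by omega),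
      Nat.cast_choose ℝ (show k ≤ k+t+1 by omega),
      show (k+t+1) - (k+1) = t by omega,
      show (k+2*t+2) - k = 2*t+2 by omega,
      show (k+2*t+1) - (k+1) = 2*t by omega,
      show (k+t+1) - k = t+1 by omega,
      show (k+2*t+2).factorial = (k+2*t+2) * (k+2*t+1).factorial from Nat.factorial_succ _,
      show (2*t+2).factorial = (2*t+2) * ((2*t+1) * (2*t).factorial) from by
        rw [show (2*t+2) = (2*t+1)+1 by omega, Nat.factorial_succ, Nat.factorial_succ],
      show (t+1).factorial = (t+1) * t.factorial from Nat.factorial_succ _,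
      show (k+1).factorial = (k+1) * k.factorial from Nat.factorial_succ _]
  have h1 : (((k+t+1).factorial : ℕ) : ℝ) ≠ 0 := Nat.cast_ne_zero.2 (Nat.factorial_ne_zero _)
  have h2 : (((k+2*t+1).factorial : ℕ) : ℝ) ≠ 0 := Nat.cast_ne_zero.2 (Nat.factorial_ne_zero _)
  have h3 : ((t.factorial : ℕ) : ℝ) ≠ 0 := Nat.cast_ne_zero.2 (Nat.factorial_ne_zero _)
  have h4 : (((2*t).factorial : ℕ) : ℝ) ≠ 0 := Nat.cast_ne_zero.2 (Nat.factorial_ne_zero _)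
  have h5 : ((k.factorial : ℕ) : ℝ) ≠ 0 := Nat.cast_ne_zero.2 (Nat.factorial_ne_zero _)
  have h6 : ((t:ℝ)+1) ≠ 0 := by positivity
  have h7 : ((k:ℝ)+1) ≠ 0 := by positivity
  have h8 : (2*(t:ℝ)+2) ≠ 0 := by positivity
  have h9 : (2*(t:ℝ)+1) ≠ 0 := by positivity
  push_cast
  field_simp

lemma pureO (t k : ℕ) :
    (2:ℝ) * (2*t+3) * ((k+t+1).choose (k+1)) * ((k+2*t+3).choose k)
      = (k+2*t+3) * ((k+2*t+2).choose (k+1)) * ((k+t+1).choose k) := by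
  rw [Nat.cast_choose ℝ (show k+1 ≤ k+t+1 by omega),
      Nat.cast_choose ℝ (show k ≤ k+2*t+3 by omega),
      Nat.cast_choose ℝ (show k+1 ≤ k+2*t+2 by omega),
      Nat.cast_choose ℝ (show k ≤ k+t+1 by omega),
      show (k+t+1) - (k+1) = t by omega,
      show (k+2*t+3) - k = 2*t+3 by omega,
      show (k+2*t+2) - (k+1) = 2*t+1 by omega,
      show (k+t+1) - k = t+1 by omega,
      show (k+2*t+3).factorial = (k+2*t+3) * (k+2*t+2).factorial from Nat.factorial_succ _,
      show (2*t+3).factorial = (2*t+3) * ((2*t+2) * (2*t+1).factorial) from by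
        rw [show (2*t+3) = (2*t+2)+1 by omega, Nat.factorial_succ, Nat.factorial_succ],
      show (t+1).factorial = (t+1) * t.factorial from Nat.factorial_succ _,
      show (k+1).factorial = (k+1) * k.factorial from Nat.factorial_succ _]
  have h1 : (((k+t+1).factorial : ℕ) : ℝ) ≠ 0 := Nat.cast_ne_zero.2 (Nat.factorial_ne_zero _)
  have h2 : (((k+2*t+2).factorial : ℕ) : ℝ) ≠ 0 := Nat.cast_ne_zero.2 (Nat.factorial_ne_zero _)
  have h3 : ((t.factorial : ℕ) : ℝ) ≠ 0 := Nat.cast_ne_zero.2 (Nat.factorial_ne_zero _)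
  have h4 : (((2*t+1).factorial : ℕ) : ℝ) ≠ 0 := Nat.cast_ne_zero.2 (Nat.factorial_ne_zero _)
  have h5 : ((k.factorial : ℕ) : ℝ) ≠ 0 := Nat.cast_ne_zero.2 (Nat.factorial_ne_zero _)
  have h6 : ((t:ℝ)+1) ≠ 0 := by positivity
  have h7 : ((k:ℝ)+1) ≠ 0 := by positivity
  have h8 : (2*(t:ℝ)+2) ≠ 0 := by positivity
  have h9 : (2*(t:ℝ)+3) ≠ 0 := by positivity
  push_cast
  field_simp

lemma prodE (m : ℕ) : ∀ k, k ≤ m →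
    (2:ℝ)^k * ((2*m - k : ℕ) : ℝ) * (m.choose k : ℝ) * (∏ i ∈ Ico (m-k) m, (2*(i:ℝ)+1))
      = 2*m * (((2*m - k).choose k : ℕ) : ℝ) * (∏ i ∈ Ico (m-k) m, ((i:ℝ)+m)) := by
  intro k
  induction k with
  | zero => intro _; simp
  | succ k ih =>
    intro hk
    have IH := ih (by omega)
    obtain ⟨t, rfl⟩ : ∃ t, m = k + t + 1 := ⟨m - k - 1, by omega⟩
    rw [show (k+t+1) - (k+1) = t by omega, show 2*(k+t+1) - (k+1) = k+2*t+1 by omega]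
    rw [show (k+t+1) - k = t+1 by omega, show 2*(k+t+1) - k = k+2*t+2 by omega] at IH
    rw [Finset.prod_eq_prod_Ico_succ_bot (show t < k+t+1 by omega) (fun i => 2*(i:ℝ)+1),
        Finset.prod_eq_prod_Ico_succ_bot (show t < k+t+1 by omega)
          (fun i => (i:ℝ)+((k+t+1 : ℕ):ℝ))]
    have hB : (2*((k:ℝ)+t+1)) * (((k+2*t+2).choose k : ℕ) : ℝ) ≠ 0 := by
      have : (0:ℝ) < ((k+2*t+2).choose k : ℕ) := by
        exact_mod_cast Nat.choose_pos (by omega)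
      positivity
    have hpure := pureE t k
    apply mul_left_cancel₀ hB
    push_cast at IH hpure ⊢
    linear_combination (2*((k:ℝ)+t+1)*((k:ℝ)+2*t+1)*2^k*(∏ i ∈ Ico (t+1) (k+t+1), (2*(i:ℝ)+1))) * hpure
      + (2*((k:ℝ)+t+1)*((k:ℝ)+2*t+1)*(((k+2*t+1).choose (k+1) : ℕ):ℝ)) * IH

lemma prodO (m : ℕ) : ∀ k, k ≤ m →
    (2:ℝ)^k * ((2*m + 1 - k : ℕ) : ℝ) * (m.choose k : ℝ) * (∏ i ∈ Ico (m-k) m, (2*(i:ℝ)+3))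
      = (2*m+1) * (((2*m + 1 - k).choose k : ℕ) : ℝ) * (∏ i ∈ Ico (m-k) m, ((i:ℝ)+m+1)) := by
  intro k
  induction k with
  | zero => intro _; simp
  | succ k ih =>
    intro hk
    have IH := ih (by omega)
    obtain ⟨t, rfl⟩ : ∃ t, m = k + t + 1 := ⟨m - k - 1, by omega⟩
    rw [show (k+t+1) - (k+1) = t by omega, show 2*(k+t+1) + 1 - (k+1) = k+2*t+2 by omega]
    rw [show (k+t+1) - k = t+1 by omega, show 2*(k+t+1) + 1 - k = k+2*t+3 by omega] at IH
    rw [Finset.prod_eq_prod_Ico_succ_bot (show t < k+t+1 by omega) (fun i => 2*(i:ℝ)+3),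
        Finset.prod_eq_prod_Ico_succ_bot (show t < k+t+1 by omega)
          (fun i => (i:ℝ)+((k+t+1 : ℕ):ℝ)+1)]
    have hB : ((2*((k:ℝ)+t+1)+1)) * (((k+2*t+3).choose k : ℕ) : ℝ) ≠ 0 := by
      have : (0:ℝ) < ((k+2*t+3).choose k : ℕ) := by
        exact_mod_cast Nat.choose_pos (by omega)
      positivity
    have hpure := pureO t k
    apply mul_left_cancel₀ hB
    push_cast at IH hpure ⊢
    linear_combination ((2*((k:ℝ)+t+1)+1)*((k:ℝ)+2*t+2)*2^k*(∏ i ∈ Ico (t+1) (k+t+1), (2*(i:ℝ)+3))) * hpure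
      + ((2*((k:ℝ)+t+1)+1)*((k:ℝ)+2*t+2)*(((k+2*t+2).choose (k+1) : ℕ):ℝ)) * IH


lemma coeffE (m k : ℕ) (hm : 1 ≤ m) (hk : k ≤ m) :
    (2:ℝ)^(2*m-1) * ((∏ i ∈ range m, (2*(i:ℝ)+1) / (-(2*(i:ℝ)+2*m))) *
      ((m.choose k : ℝ) * ∏ i ∈ range (m-k), (-(2*(i:ℝ)+2*m)) / (2*(i:ℝ)+1)))
    = cc (2*m) k := by
  have hm' : (1:ℝ) ≤ (m:ℝ) := by exact_mod_cast hm
  have hsplit : (∏ i ∈ range m, (2*(i:ℝ)+1) / (-(2*(i:ℝ)+2*m)))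
      = (∏ i ∈ range (m-k), (2*(i:ℝ)+1) / (-(2*(i:ℝ)+2*m)))
        * ∏ i ∈ Ico (m-k) m, (2*(i:ℝ)+1) / (-(2*(i:ℝ)+2*m)) := by
    rw [Finset.range_eq_Ico,
        ← Finset.prod_Ico_consecutive _ (Nat.zero_le (m-k)) (show m-k ≤ m by omega),
        ← Finset.range_eq_Ico]
  have hcan : (∏ i ∈ range (m-k), (2*(i:ℝ)+1) / (-(2*(i:ℝ)+2*m)))
      * (∏ i ∈ range (m-k), (-(2*(i:ℝ)+2*m)) / (2*(i:ℝ)+1)) = 1 := by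
    rw [← Finset.prod_mul_distrib]
    apply Finset.prod_eq_one
    intro i hi
    have h1 : (2*(i:ℝ)+1) ≠ 0 := by positivity
    have h2 : (-(2*(i:ℝ)+2*m)) ≠ 0 := by
      have : (0:ℝ) < 2*(i:ℝ)+2*m := by nlinarith [Nat.cast_nonneg (α := ℝ) i]
      exact neg_ne_zero.2 this.ne'
    rw [div_mul_div_comm, mul_comm (2*(i:ℝ)+1)]
    exact div_self (mul_ne_zero h2 h1)
  have hred : (2:ℝ)^(2*m-1) * ((∏ i ∈ range m, (2*(i:ℝ)+1) / (-(2*(i:ℝ)+2*m))) *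
      ((m.choose k : ℝ) * ∏ i ∈ range (m-k), (-(2*(i:ℝ)+2*m)) / (2*(i:ℝ)+1)))
      = 2^(2*m-1) * (m.choose k : ℝ) * ∏ i ∈ Ico (m-k) m, (2*(i:ℝ)+1) / (-(2*(i:ℝ)+2*m)) := by
    rw [hsplit]
    linear_combination ((2:ℝ)^(2*m-1) * (m.choose k : ℝ)
      * (∏ i ∈ Ico (m-k) m, (2*(i:ℝ)+1) / (-(2*(i:ℝ)+2*m)))) * hcan
  rw [hred]
  have hIco : (∏ i ∈ Ico (m-k) m, (2*(i:ℝ)+1) / (-(2*(i:ℝ)+2*m)))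
      = (∏ i ∈ Ico (m-k) m, (2*(i:ℝ)+1)) / ((-2)^k * ∏ i ∈ Ico (m-k) m, ((i:ℝ)+m)) := by
    rw [Finset.prod_div_distrib]
    congr 1
    rw [show (∏ i ∈ Ico (m-k) m, (-(2*(i:ℝ)+2*m)))
        = ∏ i ∈ Ico (m-k) m, ((-2) * ((i:ℝ)+m)) from Finset.prod_congr rfl fun i _ => by ring,
      Finset.prod_mul_distrib, Finset.prod_const, Nat.card_Ico,
      show m - (m-k) = k by omega]
  rw [hIco]
  unfold cc
  have hA : (0:ℝ) < ∏ i ∈ Ico (m-k) m, (2*(i:ℝ)+1) := Finset.prod_pos fun i _ => by positivity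
  have hB : (0:ℝ) < ∏ i ∈ Ico (m-k) m, ((i:ℝ)+m) :=
    Finset.prod_pos fun i _ => by nlinarith [Nat.cast_nonneg (α := ℝ) i]
  have hmk : ((2*m - k : ℕ) : ℝ) = 2*(m:ℝ) - k := by
    push_cast [Nat.cast_sub (show k ≤ 2*m by omega)]; ring
  have hmk0 : 2*(m:ℝ) - (k:ℝ) ≠ 0 := by
    have : (k:ℝ) ≤ m := by exact_mod_cast hk
    nlinarith
  have hP := prodE m k hk
  rw [hmk] at hP ⊢
  rw [show (2*m - 2*k) = 2*(m-k) by omega]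
  have pow1 : (2:ℝ)^(2*(m-k)) * 2^(2*k) = 2^(2*m) := by
    rw [← pow_add]; congr 1; omega
  have pow2 : (2:ℝ)^(2*m-1) * 2 = 2^(2*m) := by
    rw [show ((2:ℝ)^(2*m-1) * 2) = 2^((2*m-1)+1) from (pow_succ 2 (2*m-1)).symm]
    congr 1; omega
  rw [neg_pow (2:ℝ) k]
  rcases Nat.even_or_odd k with hke | hko
  · rw [Even.neg_one_pow hke]
    push_cast
    field_simp
    linear_combination (1/2:ℝ) * (((2:ℝ)^(2*(m-k)) * 2^k) * hP
      + ((2*(m:ℝ)-k) * (m.choose k : ℝ) * (∏ i ∈ Ico (m-k) m, (2*(i:ℝ)+1))) * (pow2 - pow1))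
  · rw [Odd.neg_one_pow hko]
    push_cast
    field_simp
    linear_combination (-1/2:ℝ) * (((2:ℝ)^(2*(m-k)) * 2^k) * hP
      + ((2*(m:ℝ)-k) * (m.choose k : ℝ) * (∏ i ∈ Ico (m-k) m, (2*(i:ℝ)+1))) * (pow2 - pow1))


lemma coeffO (m k : ℕ) (hk : k ≤ m) :
    (2:ℝ)^(2*m) * ((∏ i ∈ range m, (2*(i:ℝ)+3) / (-(2*(i:ℝ)+2*m+2))) *
      ((m.choose k : ℝ) * ∏ i ∈ range (m-k), (-(2*(i:ℝ)+2*m+2)) / (2*(i:ℝ)+3)))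
    = cc (2*m+1) k := by
  have hsplit : (∏ i ∈ range m, (2*(i:ℝ)+3) / (-(2*(i:ℝ)+2*m+2)))
      = (∏ i ∈ range (m-k), (2*(i:ℝ)+3) / (-(2*(i:ℝ)+2*m+2)))
        * ∏ i ∈ Ico (m-k) m, (2*(i:ℝ)+3) / (-(2*(i:ℝ)+2*m+2)) := by
    rw [Finset.range_eq_Ico,
        ← Finset.prod_Ico_consecutive _ (Nat.zero_le (m-k)) (show m-k ≤ m by omega),
        ← Finset.range_eq_Ico]
  have hcan : (∏ i ∈ range (m-k), (2*(i:ℝ)+3) / (-(2*(i:ℝ)+2*m+2)))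
      * (∏ i ∈ range (m-k), (-(2*(i:ℝ)+2*m+2)) / (2*(i:ℝ)+3)) = 1 := by
    rw [← Finset.prod_mul_distrib]
    apply Finset.prod_eq_one
    intro i hi
    have h1 : (2*(i:ℝ)+3) ≠ 0 := by positivity
    have h2 : (-(2*(i:ℝ)+2*(m:ℝ)+2)) ≠ 0 := by
      have : (0:ℝ) < 2*(i:ℝ)+2*m+2 := by positivity
      exact neg_ne_zero.2 this.ne'
    rw [div_mul_div_comm, mul_comm (2*(i:ℝ)+3)]
    exact div_self (mul_ne_zero h2 h1)
  have hred : (2:ℝ)^(2*m) * ((∏ i ∈ range m, (2*(i:ℝ)+3) / (-(2*(i:ℝ)+2*m+2))) *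
      ((m.choose k : ℝ) * ∏ i ∈ range (m-k), (-(2*(i:ℝ)+2*m+2)) / (2*(i:ℝ)+3)))
      = 2^(2*m) * (m.choose k : ℝ) * ∏ i ∈ Ico (m-k) m, (2*(i:ℝ)+3) / (-(2*(i:ℝ)+2*m+2)) := by
    rw [hsplit]
    linear_combination ((2:ℝ)^(2*m) * (m.choose k : ℝ)
      * (∏ i ∈ Ico (m-k) m, (2*(i:ℝ)+3) / (-(2*(i:ℝ)+2*m+2)))) * hcan
  rw [hred]
  have hIco : (∏ i ∈ Ico (m-k) m, (2*(i:ℝ)+3) / (-(2*(i:ℝ)+2*m+2)))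
      = (∏ i ∈ Ico (m-k) m, (2*(i:ℝ)+3)) / ((-2)^k * ∏ i ∈ Ico (m-k) m, ((i:ℝ)+m+1)) := by
    rw [Finset.prod_div_distrib]
    congr 1
    rw [show (∏ i ∈ Ico (m-k) m, (-(2*(i:ℝ)+2*(m:ℝ)+2)))
        = ∏ i ∈ Ico (m-k) m, ((-2) * ((i:ℝ)+(m:ℝ)+1)) from Finset.prod_congr rfl fun i _ => by ring,
      Finset.prod_mul_distrib, Finset.prod_const, Nat.card_Ico,
      show m - (m-k) = k by omega]
  rw [hIco]
  unfold cc
  have hA : (0:ℝ) < ∏ i ∈ Ico (m-k) m, (2*(i:ℝ)+3) := Finset.prod_pos fun i _ => by positivity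
  have hB : (0:ℝ) < ∏ i ∈ Ico (m-k) m, ((i:ℝ)+m+1) :=
    Finset.prod_pos fun i _ => by positivity
  have hmk : ((2*m+1 - k : ℕ) : ℝ) = 2*(m:ℝ)+1 - k := by
    push_cast [Nat.cast_sub (show k ≤ 2*m+1 by omega)]; ring
  have hmk0 : 2*(m:ℝ)+1 - (k:ℝ) ≠ 0 := by
    have : (k:ℝ) ≤ m := by exact_mod_cast hk
    nlinarith
  have hP := prodO m k hk
  rw [hmk] at hP ⊢
  rw [show (2*m+1 - 2*k) = 2*(m-k)+1 by omega]
  have pow1 : (2:ℝ)^(2*(m-k)+1) * 2^(2*k) = 2^(2*m+1) := by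
    rw [← pow_add]; congr 1; omega
  have pow2 : (2:ℝ)^(2*m) * 2 = 2^(2*m+1) := by
    rw [show ((2:ℝ)^(2*m) * 2) = 2^((2*m)+1) from (pow_succ 2 (2*m)).symm]
  rw [neg_pow (2:ℝ) k]
  rcases Nat.even_or_odd k with hke | hko
  · rw [Even.neg_one_pow hke]
    push_cast
    field_simp
    linear_combination ((2:ℝ)^(2*(m-k)+1) * 2^k) * hP
      + ((2*(m:ℝ)+1-k) * (m.choose k : ℝ) * (∏ i ∈ Ico (m-k) m, (2*(i:ℝ)+3))) * (pow2 - pow1)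
  · rw [Odd.neg_one_pow hko]
    push_cast
    field_simp
    linear_combination (-1:ℝ) * (((2:ℝ)^(2*(m-k)+1) * 2^k) * hP
      + ((2*(m:ℝ)+1-k) * (m.choose k : ℝ) * (∏ i ∈ Ico (m-k) m, (2*(i:ℝ)+3))) * (pow2 - pow1))

lemma T_formula (n : ℕ) (hn : 1 ≤ n) (x : ℝ) :
    (Polynomial.Chebyshev.T ℝ (n : ℤ)).eval x = ∑ k ∈ range (n/2+1), cc n k * x^(n-2*k) := by
  obtain ⟨m, rfl⟩ : ∃ m, n = m + 1 := ⟨n-1, by omega⟩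
  exact (T_pair x m).1

/-- The Chebyshev polynomials of the first kind in terms of the basic class:
`T_n(x) = 2^{n−1} · S̄_n(−1,1,−1,0;x)` for `n ≥ 1`. -/
theorem chebyshevT_eq_Sbar (n : ℕ) (hn : 1 ≤ n) (x : ℝ) :
    (Polynomial.Chebyshev.T ℝ (n : ℤ)).eval x =
      2 ^ (n - 1) * Sbar (-1) 1 (-1) 0 n x := by
  rw [T_formula n hn x]
  unfold Sbar S
  rcases Nat.even_or_odd n with ⟨m, hm⟩ | ⟨m, hm⟩
  · obtain rfl : n = 2*m := by omega
    have hm1 : 1 ≤ m := by omega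
    simp only [show 2*m/2 = m by omega,
      show ((-1:ℝ))^(2*m+1) = -1 from Odd.neg_one_pow ⟨m, by ring⟩]
    rw [Finset.mul_sum, Finset.mul_sum]
    apply Finset.sum_congr rfl
    intro k hk
    rw [Finset.mem_range] at hk
    have hpref : (∏ i ∈ Finset.range m,
          ((2*(i:ℝ) + -1 + 2) * 1 + 0) / ((2*(i:ℝ) + -1 + 2*(m:ℝ)) * -1 + -1))
        = ∏ i ∈ range m, (2*(i:ℝ)+1) / (-(2*(i:ℝ)+2*(m:ℝ))) :=
      Finset.prod_congr rfl fun i _ => by congr 1 <;> ring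
    have hinner : (∏ i ∈ Finset.range (m-k),
          ((2*(i:ℝ) + -1 + 2*(m:ℝ)) * -1 + -1) / ((2*(i:ℝ) + -1 + 2) * 1 + 0))
        = ∏ i ∈ range (m-k), (-(2*(i:ℝ)+2*(m:ℝ))) / (2*(i:ℝ)+1) :=
      Finset.prod_congr rfl fun i _ => by congr 1 <;> ring
    rw [hpref, hinner]
    rw [← coeffE m k hm1 (by omega)]; ring
  · obtain rfl : n = 2*m+1 := by omega
    simp only [show (2*m+1)/2 = m by omega,
      show ((-1:ℝ))^(2*m+1+1) = 1 from Even.neg_one_pow ⟨m+1, by ring⟩]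
    rw [Finset.mul_sum, Finset.mul_sum]
    apply Finset.sum_congr rfl
    intro k hk
    rw [Finset.mem_range] at hk
    have hpref : (∏ i ∈ Finset.range m,
          ((2*(i:ℝ) + 1 + 2) * 1 + 0) / ((2*(i:ℝ) + 1 + 2*(m:ℝ)) * -1 + -1))
        = ∏ i ∈ range m, (2*(i:ℝ)+3) / (-(2*(i:ℝ)+2*(m:ℝ)+2)) :=
      Finset.prod_congr rfl fun i _ => by congr 1 <;> ring
    have hinner : (∏ i ∈ Finset.range (m-k),
          ((2*(i:ℝ) + 1 + 2*(m:ℝ)) * -1 + -1) / ((2*(i:ℝ) + 1 + 2) * 1 + 0))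
        = ∏ i ∈ range (m-k), (-(2*(i:ℝ)+2*(m:ℝ)+2)) / (2*(i:ℝ)+3) :=
      Finset.prod_congr rfl fun i _ => by congr 1 <;> ring
    rw [hpref, hinner, show 2*m+1-1 = 2*m by omega]
    rw [← coeffO m k (by omega)]; ring
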